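/- arXiv:2005.08095 — 2 statements merged into one kernel-verified Lean document; each statement's English description precedes it below -/
import Mathlib

section
/- If G is a connected graph with no pair of true twins, then the strong 2-resolving graph G_SR^2 equals the complement of G. -/
/-- u is maximally distant from v in G. -/
def MaxDistant {V : Type*} (G : SimpleGraph V) (u v : V) : Prop :=
  ∀ w, G.Adj u w → G.dist v w ≤ G.dist v u

/-- u and v are mutually maximally distant in G. -/
def MMD {V : Type*} (G : SimpleGraph V) (u v : V) : Prop :=
  MaxDistant G u v ∧ MaxDistant G v u

/-- The strong d-resolving graph of G. -/
def strongResolvingGraph {V : Type*} (G : SimpleGraph V) (d : ℕ) : SimpleGraph V where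
  Adj u v := u ≠ v ∧ (MMD G u v ∨ d ≤ G.dist u v)
  symm := by
    constructor
    rintro u v ⟨huv, h | h⟩
    · exact ⟨huv.symm, Or.inl ⟨h.2, h.1⟩⟩
    · exact ⟨huv.symm, Or.inr (by rwa [SimpleGraph.dist_comm])⟩
  loopless := by constructor; rintro u ⟨h, -⟩; exact h rfl

/-- If a connected graph has no pair of true twins, then its strong 2-resolving
graph is the complement of G. -/
theorem stmt_15 {V : Type*} (G : SimpleGraph V) (hG : G.Connected)
    (htwin : ∀ x y : V,
      insert x (G.neighborSet x) = insert y (G.neighborSet y) → x = y) :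
    strongResolvingGraph G 2 = Gᶜ := by
  ext u v
  constructor
  · rintro ⟨hne, h⟩
    refine ⟨hne, fun hadj => ?_⟩
    rcases h with ⟨h1, h2⟩ | h2
    · -- MMD and adjacent: derive true twins
      have hd1 : G.dist u v = 1 := SimpleGraph.dist_eq_one_iff_adj.mpr hadj
      have hd1' : G.dist v u = 1 := SimpleGraph.dist_eq_one_iff_adj.mpr hadj.symm
      have key : ∀ a b : V, G.Adj a b → G.dist a b = 1 :=
        fun a b hab => SimpleGraph.dist_eq_one_iff_adj.mpr hab
      apply hne
      apply htwin
      ext w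
      simp only [Set.mem_insert_iff, SimpleGraph.mem_neighborSet]
      constructor
      · rintro (rfl | hw)
        · exact Or.inr hadj.symm
        · have := h1 w hw
          rw [hd1'] at this
          interval_cases h : G.dist v w
          · rcases (hG.dist_eq_zero_iff).mp h with rfl
            exact Or.inl rfl
          · exact Or.inr (SimpleGraph.dist_eq_one_iff_adj.mp h)
      · rintro (rfl | hw)
        · exact Or.inr hadj
        · have := h2 w hw
          rw [hd1] at this
          interval_cases h : G.dist u w
          · rcases (hG.dist_eq_zero_iff).mp h with rfl
            exact Or.inl rfl
          · exact Or.inr (SimpleGraph.dist_eq_one_iff_adj.mp h)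
    · -- dist ≥ 2 contradicts adjacency
      have := SimpleGraph.dist_eq_one_iff_adj.mpr hadj
      omega
  · rintro ⟨hne, hnadj⟩
    refine ⟨hne, Or.inr ?_⟩
    have h0 : G.dist u v ≠ 0 := fun h => hne ((hG.dist_eq_zero_iff).mp h)
    have h1 : G.dist u v ≠ 1 := fun h => hnadj (SimpleGraph.dist_eq_one_iff_adj.mp h)
    omega
end

section
/- If three vertices x, y, z of a connected graph G are pairwise mutually maximally distant, then none of them lies on a geodesic between the other two; hence x, y, z lie in general d-position for every d ≥ 2. -/
/-- `S` is a general `d`-position set of `G`: no three distinct vertices of `S`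
lie on a common geodesic of length at most `d`. -/
def IsGenDPos {V : Type*} (G : SimpleGraph V) (d : ℕ) (S : Set V) : Prop :=
  ∀ ⦃u v w : V⦄, u ∈ S → v ∈ S → w ∈ S → u ≠ v → u ≠ w → v ≠ w →
    G.dist u v + G.dist v w = G.dist u w → G.dist u w ≤ d → False

/-- The general `d`-position number of `G`. -/
noncomputable def gpNum {V : Type*} (G : SimpleGraph V) (d : ℕ) : ℕ :=
  sSup {n | ∃ S : Set V, IsGenDPos G d S ∧ S.ncard = n}

private lemma key_aux {V : Type*} (G : SimpleGraph V) (hG : G.Connected) (x y z : V) (hyz : y ≠ z)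
    (hmd : MaxDistant G y x) : G.dist x y + G.dist y z ≠ G.dist x z := by
  intro h
  obtain ⟨p, hp⟩ := hG.exists_walk_length_eq_dist y z
  cases p with
  | nil => exact hyz rfl
  | cons hadj q =>
    rename_i w
    have hq : q.length = G.dist y z - 1 := by
      simp [SimpleGraph.Walk.length_cons] at hp; omega
    have hwz : G.dist w z ≤ G.dist y z - 1 := hq ▸ SimpleGraph.dist_le q
    have hxw : G.dist x w ≤ G.dist x y := hmd w hadj
    have htri := hG.dist_triangle (u := x) (v := w) (w := z)
    have hpos : 0 < G.dist y z := hG.pos_dist_of_ne hyz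
    omega

/-- If x, y, z are pairwise mutually maximally distant, then none lies on a
geodesic between the other two; hence x, y, z lie in general d-position for
every d ≥ 2. -/
theorem stmt_19 {V : Type*} (G : SimpleGraph V) (hG : G.Connected) (x y z : V)
    (hxy : x ≠ y) (hxz : x ≠ z) (hyz : y ≠ z)
    (h1 : MMD G x y) (h2 : MMD G x z) (h3 : MMD G y z) :
    (G.dist x y + G.dist y z ≠ G.dist x z) ∧
    (G.dist y x + G.dist x z ≠ G.dist y z) ∧
    (G.dist x z + G.dist z y ≠ G.dist x y) ∧
    ∀ d : ℕ, 2 ≤ d → IsGenDPos G d {x, y, z} := by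
  have c1 : G.dist x y + G.dist y z ≠ G.dist x z := key_aux G hG x y z hyz h1.2
  have c2 : G.dist y x + G.dist x z ≠ G.dist y z := key_aux G hG y x z hxz h1.1
  have c3 : G.dist x z + G.dist z y ≠ G.dist x y := key_aux G hG x z y hyz.symm h2.2
  have e1 : G.dist x y = G.dist y x := G.dist_comm ..
  have e2 : G.dist x z = G.dist z x := G.dist_comm ..
  have e3 : G.dist y z = G.dist z y := G.dist_comm ..
  refine ⟨c1, c2, c3, ?_⟩
  intro d _ u v w hu hv hw huv huw hvw heq _
  simp only [Set.mem_insert_iff, Set.mem_singleton_iff] at hu hv hw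
  rcases hu with rfl | rfl | rfl <;> rcases hv with rfl | rfl | rfl <;>
    rcases hw with rfl | rfl | rfl <;>
    first
      | exact huv rfl
      | exact huw rfl
      | exact hvw rfl
      | omega
end
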